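/- For any circular binary word W of length n ≥ 4, the integer 4·(|W|_{0011} − |W|_{1100}) equals (|W|_{0011} + |W|_{1101} + |W|_{1010} + |W|_{0100}) − (|W|_{1100} + |W|_{1011} + |W|_{0101} + |W|_{0010}); i.e., the signed number of traversals of the 4-cycle 001→110→101→010→001 in the shortened graph is 4 times the common Grandsart difference. -/

import Mathlib

/-- Number of cyclic occurrences of the word `U` (of length `k`) in the circular
binary word `W` of length `n`. -/
def occ (n k : ℕ) [NeZero n] (W : ZMod n → Fin 2) (U : Fin k → Fin 2) : ℕ :=
  (Finset.univ.filter (fun i : ZMod n => ∀ j : Fin k, W (i + (j.val : ZMod n)) = U j)).card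


lemma occ4_eq (n : ℕ) [NeZero n] (W : ZMod n → Fin 2) (U : Fin 4 → Fin 2) :
    occ n 4 W U = (Finset.univ.filter (fun i : ZMod n =>
      W i = U 0 ∧ W (i+1) = U 1 ∧ W (i+2) = U 2 ∧ W (i+3) = U 3)).card := by
  unfold occ
  congr 1
  ext i
  simp only [Finset.mem_filter, Finset.mem_univ, true_and, Fin.forall_fin_succ,
    IsEmpty.forall_iff, and_true]
  norm_num
  exact fun _ _ _ => Iff.rfl

lemma card_and_split (n : ℕ) [NeZero n] (p : ZMod n → Fin 2) (Q : ZMod n → Prop)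
    [DecidablePred Q] :
    (Finset.univ.filter (fun i : ZMod n => p i = 0 ∧ Q i)).card
      + (Finset.univ.filter (fun i : ZMod n => p i = 1 ∧ Q i)).card
      = (Finset.univ.filter Q).card := by
  have h1 : ∀ x : Fin 2, (x = 1) ↔ ¬(x = 0) := by decide
  have e0 : (Finset.univ.filter (fun i : ZMod n => p i = 0 ∧ Q i))
      = (Finset.univ.filter Q).filter (fun i => p i = 0) := by
    rw [Finset.filter_filter]
    exact Finset.filter_congr (fun i _ => and_comm)
  have e1 : (Finset.univ.filter (fun i : ZMod n => p i = 1 ∧ Q i))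
      = (Finset.univ.filter Q).filter (fun i => ¬ p i = 0) := by
    rw [Finset.filter_filter]
    refine Finset.filter_congr (fun i _ => ?_)
    rw [h1]
    exact and_comm
  rw [e0, e1, Finset.card_filter_add_card_filter_not]

lemma card_shift (n : ℕ) [NeZero n] (Q : ZMod n → Prop) [DecidablePred Q] :
    (Finset.univ.filter (fun i : ZMod n => Q (i+1))).card
      = (Finset.univ.filter Q).card := by
  refine Finset.card_bij' (fun i _ => i + 1) (fun i _ => i - 1) ?_ ?_ ?_ ?_ <;>
    intro i hi <;>
    simp only [Finset.mem_filter, Finset.mem_univ, true_and, sub_add_cancel,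
      add_sub_cancel_right] at hi ⊢ <;>
    first | exact hi | rfl

lemma split (n : ℕ) [NeZero n] (W : ZMod n → Fin 2) (a b c : Fin 2) :
    occ n 4 W ![0,a,b,c] + occ n 4 W ![1,a,b,c]
      = occ n 4 W ![a,b,c,0] + occ n 4 W ![a,b,c,1] := by
  rw [occ4_eq, occ4_eq, occ4_eq, occ4_eq]
  simp only [Matrix.cons_val_zero, Matrix.cons_val_one, Matrix.head_cons,
    Matrix.cons_val_two, Matrix.tail_cons, Matrix.cons_val_three]
  have hL := card_and_split n W (fun i => W (i+1) = a ∧ W (i+2) = b ∧ W (i+3) = c)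
  have hR : (Finset.univ.filter (fun i : ZMod n =>
        W i = a ∧ W (i+1) = b ∧ W (i+2) = c ∧ W (i+3) = 0)).card
      + (Finset.univ.filter (fun i : ZMod n =>
        W i = a ∧ W (i+1) = b ∧ W (i+2) = c ∧ W (i+3) = 1)).card
      = (Finset.univ.filter (fun i : ZMod n =>
        W i = a ∧ W (i+1) = b ∧ W (i+2) = c)).card := by
    have := card_and_split n (fun i => W (i+3)) (fun i => W i = a ∧ W (i+1) = b ∧ W (i+2) = c)
    rw [← this]
    congr 1 <;>
      · congr 1
        ext i
        simp only [Finset.mem_filter, Finset.mem_univ, true_and]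
        tauto
  rw [hL, hR]
  have h := card_shift n (fun i : ZMod n => W i = a ∧ W (i+1) = b ∧ W (i+2) = c)
  have h2 : ∀ i : ZMod n, i + 1 + 1 = i + 2 := fun i => by ring
  have h3 : ∀ i : ZMod n, i + 1 + 2 = i + 3 := fun i => by ring
  simp only [h2, h3] at h
  exact h

theorem stmt_19 (n : ℕ) [NeZero n] (hn : 4 ≤ n) (W : ZMod n → Fin 2) :
    4 * ((occ n 4 W ![0,0,1,1] : ℤ) - occ n 4 W ![1,1,0,0])
      = ((occ n 4 W ![0,0,1,1] : ℤ) + occ n 4 W ![1,1,0,1]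
          + occ n 4 W ![1,0,1,0] + occ n 4 W ![0,1,0,0])
        - ((occ n 4 W ![1,1,0,0] : ℤ) + occ n 4 W ![1,0,1,1]
          + occ n 4 W ![0,1,0,1] + occ n 4 W ![0,0,1,0]) := by
  have h1 := split n W 0 1 1
  have h2 := split n W 1 1 0
  have h3 := split n W 1 0 1
  have h4 := split n W 0 1 0
  have h5 := split n W 1 1 1
  omega
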